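/- Let U : H₁ → H₂ be unitary between Hilbert spaces with orthogonal projections P₁, P₂, and block operators U₊₊ = P₂UP₁ (viewed as an operator ran P₁ → ran P₂) and U₋₋ = (I−P₂)U(I−P₁) (viewed ran(I−P₁) → ran(I−P₂)). If U₊₊ and U₋₋ are both Fredholm, then ind(U₊₊) = −ind(U₋₋). -/

import Mathlib

theorem range_eq_ker_compl {H : Type*} [NormedAddCommGroup H] [NormedSpace ℂ H]
    (Q : H →L[ℂ] H) (hQ : Q.comp Q = Q) :
    LinearMap.range Q.toLinearMap = LinearMap.ker (1 - Q).toLinearMap := by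
  ext y
  simp only [LinearMap.mem_range, LinearMap.mem_ker, ContinuousLinearMap.sub_apply,
    ContinuousLinearMap.one_apply, ContinuousLinearMap.coe_coe]
  constructor
  · rintro ⟨x, rfl⟩
    have h := ContinuousLinearMap.ext_iff.mp hQ x
    simp only [ContinuousLinearMap.comp_apply] at h
    rw [h, sub_self]
  · intro hy
    exact ⟨y, (sub_eq_zero.mp hy).symm⟩

theorem compl_idem {H : Type*} [NormedAddCommGroup H] [NormedSpace ℂ H]
    (Q : H →L[ℂ] H) (hQ : Q.comp Q = Q) :
    (1 - Q).comp (1 - Q) = 1 - Q := by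
  ext x
  have h := ContinuousLinearMap.ext_iff.mp hQ x
  simp only [ContinuousLinearMap.comp_apply] at h
  simp only [ContinuousLinearMap.comp_apply, ContinuousLinearMap.sub_apply,
    ContinuousLinearMap.one_apply, map_sub, h]
  abel

theorem range_compl_eq_ker {H : Type*} [NormedAddCommGroup H] [NormedSpace ℂ H]
    (Q : H →L[ℂ] H) (hQ : Q.comp Q = Q) :
    LinearMap.range (1 - Q).toLinearMap = LinearMap.ker Q.toLinearMap := by
  rw [range_eq_ker_compl (1 - Q) (compl_idem Q hQ), sub_sub_cancel]

set_option maxHeartbeats 1000000 in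
open ContinuousLinearMap in
theorem ker_equiv_coker {H₁ H₂ : Type*}
    [NormedAddCommGroup H₁] [InnerProductSpace ℂ H₁] [CompleteSpace H₁]
    [NormedAddCommGroup H₂] [InnerProductSpace ℂ H₂] [CompleteSpace H₂]
    (U : H₁ →L[ℂ] H₂)
    (hU₁ : (ContinuousLinearMap.adjoint U).comp U = ContinuousLinearMap.id ℂ H₁)
    (hU₂ : U.comp (ContinuousLinearMap.adjoint U) = ContinuousLinearMap.id ℂ H₂)
    (P₁ Q₁ : H₁ →L[ℂ] H₁) (P₂ Q₂ : H₂ →L[ℂ] H₂)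
    (hQ₁ : Q₁ = 1 - P₁) (hQ₂ : Q₂ = 1 - P₂)
    (hP₁a : ContinuousLinearMap.adjoint P₁ = P₁) (hP₁i : P₁.comp P₁ = P₁)
    (hP₂a : ContinuousLinearMap.adjoint P₂ = P₂) (hP₂i : P₂.comp P₂ = P₂)
    (A : ↥(LinearMap.range P₁.toLinearMap) →L[ℂ] ↥(LinearMap.range P₂.toLinearMap))
    (hA : ∀ x : ↥(LinearMap.range P₁.toLinearMap), (A x : H₂) = P₂ (U (x : H₁)))
    (D : ↥(LinearMap.range Q₁.toLinearMap) →L[ℂ] ↥(LinearMap.range Q₂.toLinearMap))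
    (hD : ∀ x : ↥(LinearMap.range Q₁.toLinearMap), (D x : H₂) = Q₂ (U (x : H₁)))
    (hcl : IsClosed ((LinearMap.range D.toLinearMap : Submodule ℂ ↥(LinearMap.range Q₂.toLinearMap)) :
      Set ↥(LinearMap.range Q₂.toLinearMap))) :
    Nonempty ((↥(LinearMap.ker A.toLinearMap)) ≃ₗ[ℂ] (↥(LinearMap.range Q₂.toLinearMap) ⧸ LinearMap.range D.toLinearMap)) := by
  subst hQ₁ hQ₂
  -- basic facts
  have hU₁' : ∀ x, ContinuousLinearMap.adjoint U (U x) = x := fun x => by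
    have := ContinuousLinearMap.ext_iff.mp hU₁ x
    simpa using this
  have hU₂' : ∀ y, U (ContinuousLinearMap.adjoint U y) = y := fun y => by
    have := ContinuousLinearMap.ext_iff.mp hU₂ y
    simpa using this
  have hmemP₂ : ∀ y : H₂, y ∈ LinearMap.range (1 - P₂).toLinearMap ↔ P₂ y = 0 := fun y => by
    rw [range_compl_eq_ker P₂ hP₂i, LinearMap.mem_ker, ContinuousLinearMap.coe_coe]
  have hmemP₁ : ∀ y : H₁, y ∈ LinearMap.range (1 - P₁).toLinearMap ↔ P₁ y = 0 := fun y => by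
    rw [range_compl_eq_ker P₁ hP₁i, LinearMap.mem_ker, ContinuousLinearMap.coe_coe]
  have hmemrP₁ : ∀ y : H₁, y ∈ LinearMap.range P₁.toLinearMap ↔ (1 - P₁) y = 0 := fun y => by
    rw [range_eq_ker_compl P₁ hP₁i, LinearMap.mem_ker, ContinuousLinearMap.coe_coe]
  have hBa₂ : ContinuousLinearMap.adjoint (1 - P₂ : H₂ →L[ℂ] H₂) = 1 - P₂ := by
    rw [map_sub, hP₂a]
    congr 1
    rw [ContinuousLinearMap.one_def, ContinuousLinearMap.adjoint_id]
  have hBa₁ : ContinuousLinearMap.adjoint (1 - P₁ : H₁ →L[ℂ] H₁) = 1 - P₁ := by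
    rw [map_sub, hP₁a]
    congr 1
    rw [ContinuousLinearMap.one_def, ContinuousLinearMap.adjoint_id]
  -- the kernel-of-A has its image under U inside ran (1 - P₂)
  have hmem : ∀ x : ↥(LinearMap.ker A.toLinearMap), U ((x : ↥(LinearMap.range P₁.toLinearMap)) : H₁) ∈
      LinearMap.range (1 - P₂).toLinearMap := by
    intro x
    rw [hmemP₂]
    have h0 : (A (x : ↥(LinearMap.range P₁.toLinearMap)) : H₂) = 0 := by
      have hx2 := LinearMap.mem_ker.mp x.2; rw [ContinuousLinearMap.coe_coe] at hx2; rw [hx2]; rfl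
    rwa [hA] at h0
  let f : ↥(LinearMap.ker A.toLinearMap) →ₗ[ℂ] ↥(LinearMap.range (1 - P₂).toLinearMap) :=
    LinearMap.codRestrict (LinearMap.range (1 - P₂).toLinearMap)
      ((U : H₁ →ₗ[ℂ] H₂) ∘ₗ ((LinearMap.range P₁.toLinearMap).subtype ∘ₗ (LinearMap.ker A.toLinearMap).subtype)) hmem
  have hf : ∀ x : ↥(LinearMap.ker A.toLinearMap),
      ((f x : ↥(LinearMap.range (1 - P₂).toLinearMap)) : H₂) = U ((x : ↥(LinearMap.range P₁.toLinearMap)) : H₁) :=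
    fun _ => rfl
  set K : Submodule ℂ ↥(LinearMap.range (1 - P₂).toLinearMap) := LinearMap.range D.toLinearMap with hKdef
  let φ : ↥(LinearMap.ker A.toLinearMap) →ₗ[ℂ] (↥(LinearMap.range (1 - P₂).toLinearMap) ⧸ K) := K.mkQ ∘ₗ f
  have hinj : Function.Injective φ := by
    rw [injective_iff_map_eq_zero]
    intro x hx
    have hxK : f x ∈ K := by
      rw [show φ x = K.mkQ (f x) from rfl, Submodule.mkQ_apply] at hx
      exact (Submodule.Quotient.mk_eq_zero K).mp hx
    obtain ⟨z, hz⟩ := hxK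
    set u : H₁ := ((x : ↥(LinearMap.range P₁.toLinearMap)) : H₁) with hu
    have hz' : (1 - P₂) (U ((z : H₁))) = U u := by
      have := congrArg (fun w : ↥(LinearMap.range (1 - P₂).toLinearMap) => (w : H₂)) hz
      have h' : ((D z : ↥(LinearMap.range (1 - P₂).toLinearMap)) : H₂) = ((f x : ↥(LinearMap.range (1 - P₂).toLinearMap)) : H₂) := this
      rw [hD, hf] at h'
      exact h'
    have hP₂u : P₂ (U u) = 0 := by
      have h0 : (A (x : ↥(LinearMap.range P₁.toLinearMap)) : H₂) = 0 := by
        have hx2 := LinearMap.mem_ker.mp x.2; rw [ContinuousLinearMap.coe_coe] at hx2; rw [hx2]; rfl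
      rwa [hA] at h0
    have h1 : (1 - P₂) (U u) = U u := by
      simp [ContinuousLinearMap.sub_apply, hP₂u]
    have hinner : (inner ℂ (U u) (U u) : ℂ) = 0 := by
      calc (inner ℂ (U u) (U u) : ℂ)
          = inner ℂ (U u) ((1 - P₂) (U (z : H₁))) := by rw [hz']
        _ = inner ℂ ((ContinuousLinearMap.adjoint (1 - P₂ : H₂ →L[ℂ] H₂)) (U u)) (U (z : H₁)) := by
            rw [ContinuousLinearMap.adjoint_inner_left]
        _ = inner ℂ ((1 - P₂) (U u)) (U (z : H₁)) := by rw [hBa₂]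
        _ = inner ℂ (U u) (U (z : H₁)) := by rw [h1]
        _ = inner ℂ u (ContinuousLinearMap.adjoint U (U (z : H₁))) := by
            rw [ContinuousLinearMap.adjoint_inner_right]
        _ = inner ℂ u ((z : H₁)) := by rw [hU₁']
        _ = inner ℂ (P₁ u) ((z : H₁)) := by
            have h2 : u - P₁ u = 0 := by
              simpa [ContinuousLinearMap.sub_apply] using
                (hmemrP₁ u).mp (x : ↥(LinearMap.range P₁.toLinearMap)).2
            have hPu : P₁ u = u := (sub_eq_zero.mp h2).symm
            rw [hPu]
        _ = inner ℂ ((ContinuousLinearMap.adjoint P₁) u) ((z : H₁)) := by rw [hP₁a]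
        _ = inner ℂ u (P₁ ((z : H₁))) := by rw [ContinuousLinearMap.adjoint_inner_left]
        _ = 0 := by rw [(hmemP₁ _).mp (z : ↥(LinearMap.range (1 - P₁).toLinearMap)).2, inner_zero_right]
    have hUu : U u = 0 := inner_self_eq_zero.mp hinner
    have hu0 : u = 0 := by
      have := hU₁' u
      rw [hUu, map_zero] at this
      exact this.symm
    have hval : ((x : ↥(LinearMap.range P₁.toLinearMap)) : H₁) = 0 := by rw [← hu]; exact hu0
    exact Submodule.coe_eq_zero.mp (Submodule.coe_eq_zero.mp hval)
  have hsurj : Function.Surjective φ := by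
    haveI : CompleteSpace ↥(LinearMap.range (1 - P₂).toLinearMap : Submodule ℂ H₂) := by
      have hc : IsClosed ((LinearMap.range (1 - P₂).toLinearMap : Submodule ℂ H₂) : Set H₂) := by
        rw [range_compl_eq_ker P₂ hP₂i]
        exact ContinuousLinearMap.isClosed_ker P₂
      exact hc.completeSpace_coe
    haveI : CompleteSpace K := hcl.completeSpace_coe
    intro q
    obtain ⟨y, rfl⟩ := K.mkQ_surjective q
    obtain ⟨d, hd, w, hw, rfl⟩ := K.exists_add_mem_mem_orthogonal y
    have hwP₂ : P₂ ((w : H₂)) = 0 := (hmemP₂ _).mp w.2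
    set u : H₁ := ContinuousLinearMap.adjoint U (w : H₂) with hu
    have hw' : ∀ v : H₁, v ∈ LinearMap.range (1 - P₁).toLinearMap → (inner ℂ v u : ℂ) = 0 := by
      intro v hv
      have hDv : D ⟨v, hv⟩ ∈ K := ⟨⟨v, hv⟩, rfl⟩
      have h0 : (inner ℂ (D ⟨v, hv⟩) w : ℂ) = 0 := (Submodule.mem_orthogonal K w).mp hw _ hDv
      rw [Submodule.coe_inner, hD] at h0
      have step := ContinuousLinearMap.adjoint_inner_left
        (1 - P₂ : H₂ →L[ℂ] H₂) ((w : H₂)) (U v)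
      rw [hBa₂] at step
      rw [step] at h0
      have hww : (1 - P₂) ((w : H₂)) = (w : H₂) := by
        simp [ContinuousLinearMap.sub_apply, hwP₂]
      rw [hww] at h0
      rw [hu, ContinuousLinearMap.adjoint_inner_right]
      exact h0
    have hup : (1 - P₁) u = 0 := by
      have hmemv : (1 - P₁) u ∈ LinearMap.range (1 - P₁).toLinearMap := ⟨u, rfl⟩
      have h3 := hw' ((1 - P₁) u) hmemv
      have h2 : (inner ℂ ((1 - P₁) u) ((1 - P₁) u) : ℂ) = 0 := by
        calc (inner ℂ ((1 - P₁) u) ((1 - P₁) u) : ℂ)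
            = inner ℂ ((ContinuousLinearMap.adjoint (1 - P₁ : H₁ →L[ℂ] H₁)) ((1 - P₁) u)) u := by
              rw [ContinuousLinearMap.adjoint_inner_left]
          _ = inner ℂ ((1 - P₁) ((1 - P₁) u)) u := by rw [hBa₁]
          _ = inner ℂ ((1 - P₁) u) u := by
              have := ContinuousLinearMap.ext_iff.mp
                (compl_idem P₁ hP₁i) u
              simp only [ContinuousLinearMap.comp_apply] at this
              rw [this]
          _ = 0 := h3
      exact inner_self_eq_zero.mp h2
    have humem : u ∈ LinearMap.range P₁.toLinearMap := (hmemrP₁ u).mpr hup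
    have hAu : A ⟨u, humem⟩ = 0 := by
      apply Subtype.ext
      rw [hA]
      show P₂ (U u) = ((0 : ↥(LinearMap.range P₂.toLinearMap)) : H₂)
      rw [hu, hU₂']
      simpa using hwP₂
    refine ⟨⟨⟨u, humem⟩, LinearMap.mem_ker.mpr hAu⟩, ?_⟩
    have hfval : f ⟨⟨u, humem⟩, LinearMap.mem_ker.mpr hAu⟩ = w := by
      apply Subtype.ext
      show U u = (w : H₂)
      rw [hu, hU₂']
    show K.mkQ (f _) = K.mkQ (d + w)
    rw [hfval]
    have hd0 : K.mkQ d = 0 := by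
      rw [Submodule.mkQ_apply]
      exact (Submodule.Quotient.mk_eq_zero K).mpr hd
    rw [map_add, hd0, zero_add]
  exact ⟨LinearEquiv.ofBijective φ ⟨hinj, hsurj⟩⟩

/-- A bounded operator between normed spaces is Fredholm if it has finite-dimensional kernel
and finite-dimensional cokernel. -/
def IsFredholm {X Y : Type*} [NormedAddCommGroup X] [NormedSpace ℂ X]
    [NormedAddCommGroup Y] [NormedSpace ℂ Y] (T : X →L[ℂ] Y) : Prop :=
  FiniteDimensional ℂ (LinearMap.ker (T : X →ₗ[ℂ] Y)) ∧ FiniteDimensional ℂ (Y ⧸ LinearMap.range (T : X →ₗ[ℂ] Y))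

/-- The Fredholm index `dim ker T − dim coker T`. -/
noncomputable def fredholmIndex {X Y : Type*} [NormedAddCommGroup X] [NormedSpace ℂ X]
    [NormedAddCommGroup Y] [NormedSpace ℂ Y] (T : X →L[ℂ] Y) : ℤ :=
  (Module.finrank ℂ (LinearMap.ker (T : X →ₗ[ℂ] Y)) : ℤ) - (Module.finrank ℂ (Y ⧸ LinearMap.range (T : X →ₗ[ℂ] Y)) : ℤ)

/-- A continuous linear map between Banach spaces with finite-dimensional cokernel
has closed range. -/
theorem isClosed_range_of_finiteDimensional_coker {X Y : Type*}
    [NormedAddCommGroup X] [NormedSpace ℂ X] [CompleteSpace X]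
    [NormedAddCommGroup Y] [NormedSpace ℂ Y] [CompleteSpace Y]
    (T : X →L[ℂ] Y) (hfd : FiniteDimensional ℂ (Y ⧸ LinearMap.range T.toLinearMap)) :
    IsClosed ((LinearMap.range T.toLinearMap : Submodule ℂ Y) : Set Y) := by
  obtain ⟨G, hG⟩ := Submodule.exists_isCompl (LinearMap.range T.toLinearMap)
  haveI : FiniteDimensional ℂ G :=
    (Submodule.quotientEquivOfIsCompl _ G hG).finiteDimensional
  have hGclosed : IsClosed (G : Set Y) := G.closed_of_finiteDimensional
  set K : Submodule ℂ X := LinearMap.ker T.toLinearMap with hK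
  have hKclosed : IsClosed (K : Set X) := ContinuousLinearMap.isClosed_ker T
  haveI : IsClosed (K : Set X) := hKclosed
  let Tb : X ⧸ K →ₗ[ℂ] Y := K.liftQ (T : X →ₗ[ℂ] Y) le_rfl
  have hTbc : Continuous Tb := by
    refine (QuotientAddGroup.isQuotientMap_mk K.toAddSubgroup).continuous_iff.mpr ?_
    exact T.continuous
  let Tb' : (X ⧸ K) →L[ℂ] Y := ⟨Tb, hTbc⟩
  have hker : LinearMap.ker Tb'.toLinearMap = ⊥ := Submodule.ker_liftQ_eq_bot _ _ _ le_rfl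
  have hrange : LinearMap.range Tb'.toLinearMap = LinearMap.range T.toLinearMap := by
    show LinearMap.range Tb = _
    rw [Submodule.range_liftQ]
  have hcompl : IsCompl (LinearMap.range Tb'.toLinearMap) G := hrange ▸ hG
  have := ContinuousLinearMap.closed_complemented_range_of_isCompl_of_ker_eq_bot
    Tb' G hcompl hGclosed hker
  rwa [hrange] at this

/-- For a unitary `U : H₁ → H₂` with orthogonal projections `P₁, P₂`, if the diagonal blocks
`U₊₊ : ran P₁ → ran P₂` and `U₋₋ : ran(1−P₁) → ran(1−P₂)` are both Fredholm, then
`ind U₊₊ = − ind U₋₋`. -/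
theorem index_diagonal_blocks {H₁ H₂ : Type*}
    [NormedAddCommGroup H₁] [InnerProductSpace ℂ H₁] [CompleteSpace H₁]
    [NormedAddCommGroup H₂] [InnerProductSpace ℂ H₂] [CompleteSpace H₂]
    (U : H₁ →L[ℂ] H₂)
    (hU₁ : (ContinuousLinearMap.adjoint U).comp U = ContinuousLinearMap.id ℂ H₁)
    (hU₂ : U.comp (ContinuousLinearMap.adjoint U) = ContinuousLinearMap.id ℂ H₂)
    (P₁ : H₁ →L[ℂ] H₁) (P₂ : H₂ →L[ℂ] H₂)
    (hP₁a : ContinuousLinearMap.adjoint P₁ = P₁) (hP₁i : P₁.comp P₁ = P₁)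
    (hP₂a : ContinuousLinearMap.adjoint P₂ = P₂) (hP₂i : P₂.comp P₂ = P₂)
    (Vpp : ↥(LinearMap.range (P₁ : H₁ →ₗ[ℂ] H₁)) →L[ℂ] ↥(LinearMap.range (P₂ : H₂ →ₗ[ℂ] H₂)))
    (hVpp : ∀ x : ↥(LinearMap.range (P₁ : H₁ →ₗ[ℂ] H₁)), (Vpp x : H₂) = P₂ (U (x : H₁)))
    (Vmm : ↥(LinearMap.range ((1 - P₁ : H₁ →L[ℂ] H₁) : H₁ →ₗ[ℂ] H₁)) →L[ℂ] ↥(LinearMap.range ((1 - P₂ : H₂ →L[ℂ] H₂) : H₂ →ₗ[ℂ] H₂)))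
    (hVmm : ∀ x : ↥(LinearMap.range ((1 - P₁ : H₁ →L[ℂ] H₁) : H₁ →ₗ[ℂ] H₁)), (Vmm x : H₂) = (1 - P₂) (U (x : H₁)))
    (hFpp : IsFredholm Vpp) (hFmm : IsFredholm Vmm) :
    fredholmIndex Vpp = - fredholmIndex Vmm := by
  -- complement projections are self-adjoint idempotents
  have hQ₁a : ContinuousLinearMap.adjoint (1 - P₁ : H₁ →L[ℂ] H₁) = 1 - P₁ := by
    rw [map_sub, hP₁a]
    congr 1
    rw [ContinuousLinearMap.one_def, ContinuousLinearMap.adjoint_id]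
  have hQ₂a : ContinuousLinearMap.adjoint (1 - P₂ : H₂ →L[ℂ] H₂) = 1 - P₂ := by
    rw [map_sub, hP₂a]
    congr 1
    rw [ContinuousLinearMap.one_def, ContinuousLinearMap.adjoint_id]
  have hQ₁i : (1 - P₁ : H₁ →L[ℂ] H₁).comp (1 - P₁) = 1 - P₁ := compl_idem P₁ hP₁i
  have hQ₂i : (1 - P₂ : H₂ →L[ℂ] H₂).comp (1 - P₂) = 1 - P₂ := compl_idem P₂ hP₂i
  -- completeness of the relevant subspaces
  haveI c₁ : CompleteSpace ↥(LinearMap.range P₁.toLinearMap : Submodule ℂ H₁) := by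
    have hc : IsClosed ((LinearMap.range P₁.toLinearMap : Submodule ℂ H₁) : Set H₁) := by
      rw [range_eq_ker_compl P₁ hP₁i]
      exact ContinuousLinearMap.isClosed_ker _
    exact hc.completeSpace_coe
  haveI c₂ : CompleteSpace ↥(LinearMap.range P₂.toLinearMap : Submodule ℂ H₂) := by
    have hc : IsClosed ((LinearMap.range P₂.toLinearMap : Submodule ℂ H₂) : Set H₂) := by
      rw [range_eq_ker_compl P₂ hP₂i]
      exact ContinuousLinearMap.isClosed_ker _
    exact hc.completeSpace_coe
  haveI c₃ : CompleteSpace ↥(LinearMap.range (1 - P₁).toLinearMap : Submodule ℂ H₁) := by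
    have hc : IsClosed ((LinearMap.range (1 - P₁).toLinearMap : Submodule ℂ H₁) : Set H₁) := by
      rw [range_compl_eq_ker P₁ hP₁i]
      exact ContinuousLinearMap.isClosed_ker _
    exact hc.completeSpace_coe
  haveI c₄ : CompleteSpace ↥(LinearMap.range (1 - P₂).toLinearMap : Submodule ℂ H₂) := by
    have hc : IsClosed ((LinearMap.range (1 - P₂).toLinearMap : Submodule ℂ H₂) : Set H₂) := by
      rw [range_compl_eq_ker P₂ hP₂i]
      exact ContinuousLinearMap.isClosed_ker _
    exact hc.completeSpace_coe
  -- closed ranges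
  have hclmm : IsClosed ((LinearMap.range Vmm.toLinearMap :
      Submodule ℂ ↥(LinearMap.range (1 - P₂).toLinearMap)) : Set ↥(LinearMap.range (1 - P₂).toLinearMap)) :=
    isClosed_range_of_finiteDimensional_coker Vmm hFmm.2
  have hclpp : IsClosed ((LinearMap.range Vpp.toLinearMap :
      Submodule ℂ ↥(LinearMap.range P₂.toLinearMap)) : Set ↥(LinearMap.range P₂.toLinearMap)) :=
    isClosed_range_of_finiteDimensional_coker Vpp hFpp.2
  -- the two kernel/cokernel equivalences
  obtain ⟨e₁⟩ := ker_equiv_coker U hU₁ hU₂ P₁ (1 - P₁) P₂ (1 - P₂) rfl rfl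
    hP₁a hP₁i hP₂a hP₂i Vpp hVpp Vmm hVmm hclmm
  obtain ⟨e₂⟩ := ker_equiv_coker U hU₁ hU₂ (1 - P₁) P₁ (1 - P₂) P₂
    (sub_sub_cancel 1 P₁).symm (sub_sub_cancel 1 P₂).symm
    hQ₁a hQ₁i hQ₂a hQ₂i Vmm hVmm Vpp hVpp hclpp
  have h1 : Module.finrank ℂ ↥(LinearMap.ker Vpp.toLinearMap) =
      Module.finrank ℂ (↥(LinearMap.range (1 - P₂).toLinearMap) ⧸ LinearMap.range Vmm.toLinearMap) :=
    e₁.finrank_eq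
  have h2 : Module.finrank ℂ ↥(LinearMap.ker Vmm.toLinearMap) =
      Module.finrank ℂ (↥(LinearMap.range P₂.toLinearMap) ⧸ LinearMap.range Vpp.toLinearMap) :=
    e₂.finrank_eq
  simp only [fredholmIndex]
  omega
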